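/- For any finite sets A, B ⊆ G with |A−A| = K|A| and any integer k ≥ 2, one has E_k(B) · E(A, A+B)^k ≥ |A|^{2k+1} |B|^{2k} / K. -/

import Mathlib

open Finset Pointwise

set_option linter.unusedSectionVars false

section EnergyAux

variable {G : Type*} [AddCommGroup G] [Fintype G] [DecidableEq G]

/-- number of pairs (x,y) ∈ X × Y with x - y = d -/
private def cnt (X Y : Finset G) (d : G) : ℕ :=
  ((X ×ˢ Y).filter fun p => p.1 - p.2 = d).card

/-- number of pairs (x,y) ∈ X × Y with x + y = s -/
private def cadd (X Y : Finset G) (s : G) : ℕ :=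
  ((X ×ˢ Y).filter fun p => p.1 + p.2 = s).card

private lemma cnt_eq_filter (X Y : Finset G) (d : G) :
    cnt X Y d = (X.filter fun x => x - d ∈ Y).card := by
  unfold cnt
  apply Finset.card_bij (fun p _ => p.1)
  · rintro ⟨x, y⟩ hp
    simp only [mem_filter, mem_product] at hp ⊢
    refine ⟨hp.1.1, ?_⟩
    have := hp.2
    rw [← this]
    simpa using hp.1.2
  · rintro ⟨x, y⟩ hx ⟨x', y'⟩ hy h
    simp only [mem_filter, mem_product] at hx hy
    simp only at h
    subst h
    have : y = y' := by
      have h1 := hx.2; have h2 := hy.2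
      have := h1.trans h2.symm
      exact (sub_right_injective this).symm ▸ rfl
    simp [this]
  · intro x hx
    simp only [mem_filter] at hx
    exact ⟨(x, x - d), by simp [hx.1, hx.2], rfl⟩

private lemma sum_cnt (X Y : Finset G) : ∑ d : G, cnt X Y d = X.card * Y.card := by
  rw [← Finset.card_product]
  exact (Finset.card_eq_sum_card_fiberwise (f := fun p : G × G => p.1 - p.2) (t := univ)
    (fun x _ => mem_univ _)).symm

private lemma cnt_le (X Y : Finset G) (d : G) : cnt X Y d ≤ X.card := by
  rw [cnt_eq_filter]; exact card_filter_le _ _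

private lemma cnt_eq_zero (X Y : Finset G) {d : G} (hd : d ∉ X - Y) : cnt X Y d = 0 := by
  rw [cnt_eq_filter, Finset.card_eq_zero, Finset.filter_eq_empty_iff]
  intro x hx hm
  exact hd (by simpa using Finset.sub_mem_sub hx hm)

private lemma sum_cadd (X Y : Finset G) : ∑ s : G, cadd X Y s = X.card * Y.card := by
  rw [← Finset.card_product]
  exact (Finset.card_eq_sum_card_fiberwise (f := fun p : G × G => p.1 + p.2) (t := univ)
    (fun x _ => mem_univ _)).symm

private lemma cadd_eq_zero (X Y : Finset G) {s : G} (hs : s ∉ X + Y) : cadd X Y s = 0 := by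
  rw [cadd, Finset.card_eq_zero, Finset.filter_eq_empty_iff]
  rintro ⟨x, y⟩ hx h
  simp only [mem_product] at hx
  simp only at h
  exact hs (h ▸ Finset.add_mem_add hx.1 hx.2)

private lemma sum_cadd_mem (X Y : Finset G) :
    ∑ s ∈ X + Y, cadd X Y s = X.card * Y.card := by
  rw [← sum_cadd (X := X) (Y := Y)]
  exact Finset.sum_subset (Finset.subset_univ _) (fun s _ hs => cadd_eq_zero X Y hs)

private lemma card_filter_prod_eq_sum {α β : Type*} [DecidableEq α] [DecidableEq β]
    (s : Finset α) (t : Finset β) (f : α → G) (g : β → G) :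
    ((s ×ˢ t).filter fun p => f p.1 = g p.2).card
      = ∑ d : G, (s.filter fun a => f a = d).card * (t.filter fun b => g b = d).card := by
  rw [Finset.card_eq_sum_card_fiberwise (f := fun p => f p.1) (t := univ)
    (fun x _ => mem_univ _)]
  refine Finset.sum_congr rfl fun d _ => ?_
  rw [Finset.filter_filter, ← Finset.card_product, ← Finset.filter_product]
  congr 1
  apply Finset.filter_congr
  intro p _
  constructor
  · rintro ⟨h1, h2⟩; exact ⟨h2, h2 ▸ h1.symm⟩
  · rintro ⟨h1, h2⟩; exact ⟨h1.trans h2.symm, h1⟩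

private lemma sum_cadd_sq (X B : Finset G) :
    ∑ s : G, (cadd X B s) ^ 2 = ∑ d : G, cnt X X d * cnt B B d := by
  have h1 : ∑ s : G, (cadd X B s) ^ 2
      = (((X ×ˢ B) ×ˢ (X ×ˢ B)).filter fun p => p.1.1 + p.1.2 = p.2.1 + p.2.2).card := by
    rw [card_filter_prod_eq_sum (X ×ˢ B) (X ×ˢ B) (fun p => p.1 + p.2) (fun p => p.1 + p.2)]
    refine Finset.sum_congr rfl fun s _ => ?_
    rw [sq]; rfl
  have h2 : ∑ d : G, cnt X X d * cnt B B d
      = (((X ×ˢ X) ×ˢ (B ×ˢ B)).filter fun p => p.1.1 - p.1.2 = p.2.1 - p.2.2).card := by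
    rw [card_filter_prod_eq_sum (X ×ˢ X) (B ×ˢ B) (fun p => p.1 - p.2) (fun p => p.1 - p.2)]
    rfl
  rw [h1, h2]
  apply Finset.card_bij (fun p _ => ((p.1.1, p.2.1), (p.2.2, p.1.2)))
  · rintro ⟨⟨x, b⟩, ⟨x', b'⟩⟩ hp
    simp only [mem_filter, mem_product] at hp ⊢
    obtain ⟨⟨⟨h1, h2⟩, h3, h4⟩, h5⟩ := hp
    refine ⟨⟨⟨h1, h3⟩, h4, h2⟩, ?_⟩
    exact sub_eq_sub_iff_add_eq_add.mpr (h5.trans (add_comm x' b'))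
  · rintro ⟨⟨x, b⟩, ⟨x', b'⟩⟩ h1 ⟨⟨y, c⟩, ⟨y', c'⟩⟩ h2 h
    simp only [Prod.mk.injEq] at h
    obtain ⟨⟨r1, r2⟩, r3, r4⟩ := h
    simp [r1, r2, r3, r4]
  · rintro ⟨⟨x, x'⟩, ⟨b, b'⟩⟩ hp
    simp only [mem_filter, mem_product] at hp
    obtain ⟨⟨⟨h1, h2⟩, h3, h4⟩, h5⟩ := hp
    refine ⟨((x, b'), (x', b)), ?_, rfl⟩
    simp only [mem_filter, mem_product]
    refine ⟨⟨⟨h1, h4⟩, h2, h3⟩, ?_⟩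
    exact (sub_eq_sub_iff_add_eq_add.mp h5).trans (add_comm b x')

/-- Katz–Koester inclusion -/
private lemma katz_koester (A B : Finset G) (y : G) :
    (A.filter fun a => a - y ∈ A) + B ⊆ (A + B).filter fun s => s - y ∈ A + B := by
  intro z hz
  rw [Finset.mem_add] at hz
  obtain ⟨x, hx, b, hb, rfl⟩ := hz
  rw [Finset.mem_filter] at hx
  rw [Finset.mem_filter]
  refine ⟨Finset.add_mem_add hx.1 hb, ?_⟩
  have : x + b - y = (x - y) + b := by abel
  rw [this]
  exact Finset.add_mem_add hx.2 hb

-- bridge for the quadruple energy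
private lemma natcard_quad (A S : Finset G) :
    Nat.card {q : (G × G) × G × G //
        q.1.1 ∈ A ∧ q.1.2 ∈ A ∧ q.2.1 ∈ S ∧ q.2.2 ∈ S ∧
        q.1.1 - q.2.1 = q.1.2 - q.2.2}
      = ∑ d : G, cnt A A d * cnt S S d := by
  rw [Nat.card_eq_fintype_card, Fintype.card_subtype]
  have hset : (univ.filter fun q : (G × G) × G × G =>
      q.1.1 ∈ A ∧ q.1.2 ∈ A ∧ q.2.1 ∈ S ∧ q.2.2 ∈ S ∧ q.1.1 - q.2.1 = q.1.2 - q.2.2)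
      = ((A ×ˢ A) ×ˢ (S ×ˢ S)).filter fun p => p.1.1 - p.1.2 = p.2.1 - p.2.2 := by
    ext ⟨⟨a1, a2⟩, s1, s2⟩
    simp only [mem_filter, mem_univ, true_and, mem_product]
    constructor
    · rintro ⟨h1, h2, h3, h4, h5⟩
      exact ⟨⟨⟨h1, h2⟩, h3, h4⟩, sub_eq_sub_iff_sub_eq_sub.mp h5⟩
    · rintro ⟨⟨⟨h1, h2⟩, h3, h4⟩, h5⟩
      exact ⟨h1, h2, h3, h4, sub_eq_sub_iff_sub_eq_sub.mpr h5⟩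
  rw [hset]
  exact card_filter_prod_eq_sum (A ×ˢ A) (S ×ˢ S) (fun p => p.1 - p.2) (fun p => p.1 - p.2)

-- bridge for higher energy
private lemma natcard_tuples (B : Finset G) (k : ℕ) (hk : 0 < k) :
    Nat.card {p : (Fin k → G) × (Fin k → G) //
        (∀ i, p.1 i ∈ B) ∧ (∀ i, p.2 i ∈ B) ∧
        ∀ i j, p.1 i - p.2 i = p.1 j - p.2 j}
      = ∑ d : G, cnt B B d ^ k := by
  haveI : NeZero k := ⟨hk.ne'⟩
  rw [Nat.card_eq_fintype_card, Fintype.card_subtype]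
  rw [Finset.card_eq_sum_card_fiberwise
    (f := fun p : (Fin k → G) × (Fin k → G) => p.1 0 - p.2 0) (t := univ)
    (fun x _ => mem_univ _)]
  refine Finset.sum_congr rfl fun d _ => ?_
  have hset : ((univ.filter fun p : (Fin k → G) × (Fin k → G) =>
      (∀ i, p.1 i ∈ B) ∧ (∀ i, p.2 i ∈ B) ∧
        ∀ i j, p.1 i - p.2 i = p.1 j - p.2 j).filter
        fun p => p.1 0 - p.2 0 = d)
      = univ.filter fun p : (Fin k → G) × (Fin k → G) =>
          ∀ i, p.1 i ∈ B ∧ p.2 i ∈ B ∧ p.1 i - p.2 i = d := by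
    ext ⟨f, g⟩
    simp only [mem_filter, mem_univ, true_and]
    constructor
    · rintro ⟨⟨h1, h2, h3⟩, h4⟩
      exact fun i => ⟨h1 i, h2 i, (h3 i 0).trans h4⟩
    · intro h
      refine ⟨⟨fun i => (h i).1, fun i => (h i).2.1,
        fun i j => ((h i).2.2).trans ((h j).2.2).symm⟩, (h 0).2.2⟩
  rw [hset, ← Fintype.card_subtype]
  have e : {p : (Fin k → G) × (Fin k → G) //
        ∀ i, p.1 i ∈ B ∧ p.2 i ∈ B ∧ p.1 i - p.2 i = d}
      ≃ (Fin k → {x : G × G // x.1 ∈ B ∧ x.2 ∈ B ∧ x.1 - x.2 = d}) :=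
    { toFun := fun p i => ⟨(p.1.1 i, p.1.2 i), p.2 i⟩
      invFun := fun h => ⟨((fun i => (h i).1.1), (fun i => (h i).1.2)),
        fun i => (h i).2⟩
      left_inv := fun p => by
        apply Subtype.ext
        apply Prod.ext <;> rfl
      right_inv := fun h => by
        funext i
        apply Subtype.ext
        rfl }
  rw [Fintype.card_congr e, Fintype.card_fun, Fintype.card_fin, Fintype.card_subtype]
  congr 1
  rw [cnt]
  congr 1
  ext ⟨x, y⟩
  simp [and_assoc]

/-- weighted Jensen for powers -/
private lemma jensen_pow {ι : Type*} (s : Finset ι) (w z : ι → ℝ)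
    (hw : ∀ i ∈ s, 0 ≤ w i) (hz : ∀ i ∈ s, 0 ≤ z i) (m : ℕ) :
    (∑ i ∈ s, w i * z i) ^ m * (∑ i ∈ s, w i)
      ≤ (∑ i ∈ s, w i) ^ m * ∑ i ∈ s, w i * z i ^ m := by
  set W := ∑ i ∈ s, w i with hW
  rcases eq_or_lt_of_le (Finset.sum_nonneg hw) with h0 | hpos
  · rw [hW, ← h0, mul_zero]
    apply mul_nonneg (pow_nonneg (le_refl (0:ℝ)) m)
    exact Finset.sum_nonneg fun i hi => mul_nonneg (hw i hi) (pow_nonneg (hz i hi) m)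
  · have key := (convexOn_pow (𝕜 := ℝ) m).map_sum_le (t := s) (w := fun i => w i / W)
      (p := z) (fun i hi => div_nonneg (hw i hi) hpos.le)
      (by rw [← Finset.sum_div, div_self hpos.ne']) (fun i hi => hz i hi)
    simp only [smul_eq_mul] at key
    have e1 : ∑ i ∈ s, w i / W * z i = (∑ i ∈ s, w i * z i) / W := by
      rw [Finset.sum_div]; exact Finset.sum_congr rfl fun i _ => by ring
    have e2 : ∑ i ∈ s, w i / W * z i ^ m = (∑ i ∈ s, w i * z i ^ m) / W := by
      rw [Finset.sum_div]; exact Finset.sum_congr rfl fun i _ => by ring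
    rw [e1, e2, div_pow] at key
    calc (∑ i ∈ s, w i * z i) ^ m * W
        = ((∑ i ∈ s, w i * z i) ^ m / W ^ m) * W ^ m * W := by
          rw [div_mul_cancel₀ _ (pow_ne_zero m (show W ≠ 0 from hpos.ne'))]
      _ ≤ ((∑ i ∈ s, w i * z i ^ m) / W) * W ^ m * W := by
          gcongr
      _ = W ^ m * ∑ i ∈ s, w i * z i ^ m := by
          rw [mul_assoc, mul_comm (W ^ m) W, ← mul_assoc,
            div_mul_cancel₀ _ (show W ≠ 0 from hpos.ne'), mul_comm]

/-- generalized Hölder -/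
private lemma gen_holder {ι : Type*} (s : Finset ι) (u a : ι → ℝ) (C : ℝ) (hC : 0 ≤ C)
    (hu : ∀ i ∈ s, 0 ≤ u i) (ha : ∀ i ∈ s, 0 ≤ a i) (k : ℕ) (hkpos : 0 < k)
    (h : ∀ i ∈ s, u i ^ (k + 1) ≤ a i ^ k * C) :
    (∑ i ∈ s, u i) ^ (k + 1) ≤ (∑ i ∈ s, a i) ^ k * (s.card * C) := by
  classical
  have hzero : ∀ i ∈ s, a i = 0 → u i = 0 := by
    intro i hi h0
    have hh := h i hi
    rw [h0, zero_pow hkpos.ne', zero_mul] at hh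
    have hnn := pow_nonneg (hu i hi) (k + 1)
    have hp : u i ^ (k + 1) = 0 := le_antisymm hh hnn
    exact (pow_eq_zero_iff (Nat.succ_ne_zero k)).mp hp
  set z : ι → ℝ := fun i => u i / a i with hz
  have haz : ∀ i ∈ s, a i * z i = u i := by
    intro i hi
    rcases eq_or_ne (a i) 0 with h0 | h0
    · simp [hz, h0, hzero i hi h0]
    · simp only [hz]
      field_simp
  have hazp : ∀ i ∈ s, a i * z i ^ (k + 1) ≤ C := by
    intro i hi
    rcases eq_or_ne (a i) 0 with h0 | h0
    · simp [hz, h0, hC]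
    · have hap : 0 < a i := lt_of_le_of_ne (ha i hi) (Ne.symm h0)
      have he : a i * (u i / a i) ^ (k + 1) = u i ^ (k + 1) / a i ^ k := by
        rw [div_pow, ← mul_div_assoc, pow_succ' (a i) k, mul_div_mul_left _ _ h0]
      rw [hz]
      simp only []
      rw [he, div_le_iff₀ (pow_pos hap k)]
      linarith [h i hi]
  have key := jensen_pow s a z ha
    (fun i hi => div_nonneg (hu i hi) (ha i hi)) (k + 1)
  rw [Finset.sum_congr rfl haz] at key
  have hsum2 : ∑ i ∈ s, a i * z i ^ (k + 1) ≤ s.card * C := by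
    calc ∑ i ∈ s, a i * z i ^ (k + 1) ≤ ∑ i ∈ s, C := Finset.sum_le_sum hazp
      _ = s.card * C := by rw [Finset.sum_const, nsmul_eq_mul]
  set A := ∑ i ∈ s, a i with hA
  rcases eq_or_lt_of_le (Finset.sum_nonneg ha) with h0 | hpos
  · have hall : ∀ i ∈ s, u i = 0 := fun i hi =>
      hzero i hi ((Finset.sum_eq_zero_iff_of_nonneg ha).mp h0.symm i hi)
    rw [Finset.sum_eq_zero hall, zero_pow (Nat.succ_ne_zero k)]
    exact mul_nonneg (pow_nonneg (Finset.sum_nonneg ha) k)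
      (mul_nonneg (Nat.cast_nonneg _) hC)
  · have step : (∑ i ∈ s, u i) ^ (k + 1) * A ≤ A ^ (k + 1) * (s.card * C) :=
      le_trans key (mul_le_mul_of_nonneg_left hsum2 (pow_nonneg hpos.le _))
    have hAk : A ^ (k + 1) = A ^ k * A := pow_succ A k
    rw [hAk, mul_assoc, mul_comm A (s.card * C), ← mul_assoc] at step
    exact le_of_mul_le_mul_right step hpos

/-- key pointwise claim : `cnt A A y * |B|^{2k} ≤ E_k(B) * cnt S S y ^ k` with `S = A+B` -/
private lemma claimF (A B : Finset G) (k : ℕ) (hk : 2 ≤ k) (y : G) :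
    (cnt A A y : ℝ) * (B.card : ℝ) ^ (2 * k)
      ≤ (∑ d : G, (cnt B B d : ℝ) ^ k) * (cnt (A + B) (A + B) y : ℝ) ^ k := by
  set S := A + B with hS
  set X := A.filter fun a => a - y ∈ A with hX
  have hXA : cnt A A y = X.card := cnt_eq_filter A A y
  set u : ℝ := (X.card : ℝ) with hu
  set v : ℝ := (cnt S S y : ℝ) with hv
  set Ek : ℝ := ∑ d : G, (cnt B B d : ℝ) ^ k with hEk
  have hEknn : 0 ≤ Ek := Finset.sum_nonneg fun d _ =>
    pow_nonneg (Nat.cast_nonneg _) k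
  have hvnn : (0:ℝ) ≤ v := Nat.cast_nonneg _
  rcases Nat.eq_zero_or_pos X.card with h0 | hXpos
  · rw [hXA, h0]
    push_cast
    rw [zero_mul]
    exact mul_nonneg hEknn (pow_nonneg hvnn k)
  have hupos : (0:ℝ) < u := by rw [hu]; exact_mod_cast hXpos
  -- Step 1 : u^2 * |B|^2 ≤ v * W   with W = ∑_d cnt X X d * cnt B B d
  set W : ℝ := ∑ d : G, (cnt X X d : ℝ) * (cnt B B d : ℝ) with hW
  have hWnn : 0 ≤ W := Finset.sum_nonneg fun d _ =>
    mul_nonneg (Nat.cast_nonneg _) (Nat.cast_nonneg _)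
  have step1 : u ^ 2 * (B.card : ℝ) ^ 2 ≤ v * W := by
    have hCS := sq_sum_le_card_mul_sum_sq (s := X + B) (f := fun s => (cadd X B s : ℝ))
    have hsum : ∑ s ∈ X + B, (cadd X B s : ℝ) = u * B.card := by
      rw [hu, ← Nat.cast_mul, ← sum_cadd_mem X B]
      push_cast
      rfl
    have hsq : ∑ s ∈ X + B, (cadd X B s : ℝ) ^ 2 = W := by
      have hext : ∑ s ∈ X + B, (cadd X B s : ℝ) ^ 2 = ∑ s : G, (cadd X B s : ℝ) ^ 2 := by
        apply Finset.sum_subset (Finset.subset_univ _)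
        intro s _ hs
        rw [cadd_eq_zero X B hs]
        norm_num
      rw [hext, hW]
      calc ∑ s : G, (cadd X B s : ℝ) ^ 2
          = ((∑ s : G, (cadd X B s) ^ 2 : ℕ) : ℝ) := by push_cast; rfl
        _ = ((∑ d : G, cnt X X d * cnt B B d : ℕ) : ℝ) := by rw [sum_cadd_sq]
        _ = ∑ d : G, (cnt X X d : ℝ) * (cnt B B d : ℝ) := by push_cast; rfl
    rw [hsum, hsq] at hCS
    have hcard : ((X + B).card : ℝ) ≤ v := by
      rw [hv]
      have hsub := katz_koester A B y
      have : cnt S S y = (S.filter fun s => s - y ∈ S).card := cnt_eq_filter S S y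
      rw [this]
      exact_mod_cast Finset.card_le_card hsub
    calc u ^ 2 * (B.card : ℝ) ^ 2 = (u * B.card) ^ 2 := by ring
      _ ≤ ((X + B).card : ℝ) * W := hCS
      _ ≤ v * W := by
          apply mul_le_mul_of_nonneg_right hcard hWnn
  -- Step 2 : W^k * u^2 ≤ u^(2k+1) * Ek
  have step2 : W ^ k * u ^ 2 ≤ u ^ (2 * k + 1) * Ek := by
    have hj := jensen_pow (univ : Finset G) (fun d => (cnt X X d : ℝ))
      (fun d => (cnt B B d : ℝ)) (fun d _ => Nat.cast_nonneg _)
      (fun d _ => Nat.cast_nonneg _) k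
    have hsw : ∑ d : G, (cnt X X d : ℝ) = u ^ 2 := by
      rw [hu, ← Nat.cast_sum, sum_cnt X X]
      push_cast
      ring
    rw [hsw] at hj
    have hbound : ∑ d : G, (cnt X X d : ℝ) * (cnt B B d : ℝ) ^ k ≤ u * Ek := by
      rw [hEk, Finset.mul_sum]
      apply Finset.sum_le_sum
      intro d _
      have hle : (cnt X X d : ℝ) ≤ u := by rw [hu]; exact_mod_cast cnt_le X X d
      exact mul_le_mul_of_nonneg_right hle (pow_nonneg (Nat.cast_nonneg _) k)
    calc W ^ k * u ^ 2 ≤ (u ^ 2) ^ k * ∑ d : G, (cnt X X d : ℝ) * (cnt B B d : ℝ) ^ k := hj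
      _ ≤ (u ^ 2) ^ k * (u * Ek) := by
          apply mul_le_mul_of_nonneg_left hbound (pow_nonneg (sq_nonneg u) k)
      _ = u ^ (2 * k + 1) * Ek := by
          rw [← pow_mul, pow_succ]
          ring
  -- combine
  have h3 : u ^ (2 * k) * (B.card : ℝ) ^ (2 * k) ≤ v ^ k * W ^ k := by
    calc u ^ (2 * k) * (B.card : ℝ) ^ (2 * k)
        = (u ^ 2 * (B.card : ℝ) ^ 2) ^ k := by
          rw [mul_pow, ← pow_mul, ← pow_mul, mul_comm 2 k]
      _ ≤ (v * W) ^ k := by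
          apply pow_le_pow_left₀ (by positivity) step1
      _ = v ^ k * W ^ k := mul_pow v W k
  have h4 : u ^ (2 * k) * (B.card : ℝ) ^ (2 * k) * u ^ 2
      ≤ v ^ k * (u ^ (2 * k + 1) * Ek) := by
    calc u ^ (2 * k) * (B.card : ℝ) ^ (2 * k) * u ^ 2
        ≤ v ^ k * W ^ k * u ^ 2 := by
          apply mul_le_mul_of_nonneg_right h3 (sq_nonneg u)
      _ = v ^ k * (W ^ k * u ^ 2) := by ring
      _ ≤ v ^ k * (u ^ (2 * k + 1) * Ek) := by
          apply mul_le_mul_of_nonneg_left step2 (pow_nonneg hvnn k)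
  -- divide by u^(2k+1)
  have hfin : (u * (B.card : ℝ) ^ (2 * k)) * u ^ (2 * k + 1)
      ≤ (Ek * v ^ k) * u ^ (2 * k + 1) := by
    have e1 : (u * (B.card : ℝ) ^ (2 * k)) * u ^ (2 * k + 1)
        = u ^ (2 * k) * (B.card : ℝ) ^ (2 * k) * u ^ 2 := by
      rw [pow_succ]
      ring
    have e2 : (Ek * v ^ k) * u ^ (2 * k + 1) = v ^ k * (u ^ (2 * k + 1) * Ek) := by ring
    rw [e1, e2]
    exact h4
  have := le_of_mul_le_mul_right hfin (pow_pos hupos (2 * k + 1))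
  rw [hXA]
  exact this

end EnergyAux

/-- `E_k(B) · E(A, A+B)^k ≥ |A|^{2k+1} |B|^{2k} / K` where `|A - A| = K|A|`. -/
theorem energy_lower_bound {G : Type*} [AddCommGroup G] [Fintype G] [DecidableEq G]
    (A B : Finset G) (hA : A.Nonempty) (k : ℕ) (hk : 2 ≤ k) (K : ℝ)
    (hK : ((A - A).card : ℝ) = K * A.card) :
    (Nat.card {p : (Fin k → G) × (Fin k → G) //
        (∀ i, p.1 i ∈ B) ∧ (∀ i, p.2 i ∈ B) ∧
        ∀ i j, p.1 i - p.2 i = p.1 j - p.2 j} : ℝ) *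
      (Nat.card {q : (G × G) × G × G //
        q.1.1 ∈ A ∧ q.1.2 ∈ A ∧ q.2.1 ∈ A + B ∧ q.2.2 ∈ A + B ∧
        q.1.1 - q.2.1 = q.1.2 - q.2.2} : ℝ) ^ k ≥
      (A.card : ℝ) ^ (2 * k + 1) * (B.card : ℝ) ^ (2 * k) / K := by
  classical
  set S := A + B with hS
  -- identify the two Nat.card quantities
  have hkpos : 0 < k := by omega
  have hbridge1 : (Nat.card {p : (Fin k → G) × (Fin k → G) //
      (∀ i, p.1 i ∈ B) ∧ (∀ i, p.2 i ∈ B) ∧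
      ∀ i j, p.1 i - p.2 i = p.1 j - p.2 j} : ℝ)
      = ∑ d : G, (cnt B B d : ℝ) ^ k := by
    rw [natcard_tuples B k hkpos]
    push_cast
    rfl
  have hbridge2 : (Nat.card {q : (G × G) × G × G //
      q.1.1 ∈ A ∧ q.1.2 ∈ A ∧ q.2.1 ∈ A + B ∧ q.2.2 ∈ A + B ∧
      q.1.1 - q.2.1 = q.1.2 - q.2.2} : ℝ)
      = ∑ d : G, (cnt A A d : ℝ) * (cnt S S d : ℝ) := by
    rw [← hS, natcard_quad A S]
    push_cast
    rfl
  rw [hbridge1, hbridge2]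
  set Ek : ℝ := ∑ d : G, (cnt B B d : ℝ) ^ k with hEk
  set E2 : ℝ := ∑ d : G, (cnt A A d : ℝ) * (cnt S S d : ℝ) with hE2
  have hEknn : 0 ≤ Ek := Finset.sum_nonneg fun d _ => pow_nonneg (Nat.cast_nonneg _) k
  have hE2nn : 0 ≤ E2 := Finset.sum_nonneg fun d _ =>
    mul_nonneg (Nat.cast_nonneg _) (Nat.cast_nonneg _)
  have hAcpos : (0:ℝ) < A.card := by exact_mod_cast Finset.card_pos.mpr hA
  have hDpos : (0:ℝ) < ((A - A).card : ℝ) := by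
    exact_mod_cast Finset.card_pos.mpr (hA.sub hA)
  have hKpos : 0 < K := by
    rw [hK] at hDpos
    by_contra h
    push_neg at h
    nlinarith
  rcases B.eq_empty_or_nonempty with rfl | hB
  · have : (Finset.card (∅ : Finset G) : ℝ) = 0 := by simp
    rw [this, zero_pow (by omega : 2 * k ≠ 0), mul_zero, zero_div]
    exact mul_nonneg hEknn (pow_nonneg hE2nn k)
  have hbc : (0:ℝ) < B.card := by exact_mod_cast Finset.card_pos.mpr hB
  set bc : ℝ := (B.card : ℝ) with hbc'
  set D := A - A with hD
  set C : ℝ := Ek / bc ^ (2 * k) with hC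
  have hCnn : 0 ≤ C := div_nonneg hEknn (by positivity)
  -- pointwise hypothesis for gen_holder
  have hpoint : ∀ y ∈ D, ((cnt A A y : ℝ)) ^ (k + 1)
      ≤ ((cnt A A y : ℝ) * (cnt S S y : ℝ)) ^ k * C := by
    intro y _
    set u : ℝ := (cnt A A y : ℝ) with hu
    set v : ℝ := (cnt S S y : ℝ) with hv
    have hclaim := claimF A B k hk y
    rw [← hS] at hclaim
    have hunn : 0 ≤ u := Nat.cast_nonneg _
    have hvnn : 0 ≤ v := Nat.cast_nonneg _
    have hle : u ≤ Ek * v ^ k / bc ^ (2 * k) := by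
      rw [le_div_iff₀ (by positivity)]
      exact hclaim
    calc u ^ (k + 1) = u ^ k * u := pow_succ u k
      _ ≤ u ^ k * (Ek * v ^ k / bc ^ (2 * k)) :=
          mul_le_mul_of_nonneg_left hle (pow_nonneg hunn k)
      _ = (u * v) ^ k * C := by rw [mul_pow, hC]; ring
  have hgh := gen_holder D (fun y => (cnt A A y : ℝ))
    (fun y => (cnt A A y : ℝ) * (cnt S S y : ℝ)) C hCnn
    (fun y _ => Nat.cast_nonneg _)
    (fun y _ => mul_nonneg (Nat.cast_nonneg _) (Nat.cast_nonneg _)) k hkpos hpoint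
  have hDsum : ∑ y ∈ D, (cnt A A y : ℝ) = (A.card : ℝ) ^ 2 := by
    have hext : ∑ y ∈ D, (cnt A A y : ℝ) = ∑ y : G, (cnt A A y : ℝ) := by
      apply Finset.sum_subset (Finset.subset_univ _)
      intro y _ hy
      rw [hD] at hy
      rw [cnt_eq_zero A A hy]
      norm_num
    rw [hext, ← Nat.cast_sum, sum_cnt A A]
    push_cast
    ring
  have hsubD : ∑ y ∈ D, (cnt A A y : ℝ) * (cnt S S y : ℝ) ≤ E2 := by
    rw [hE2]
    apply Finset.sum_le_sum_of_subset_of_nonneg (Finset.subset_univ _)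
    intro y _ _
    exact mul_nonneg (Nat.cast_nonneg _) (Nat.cast_nonneg _)
  rw [hDsum] at hgh
  have hmain : ((A.card : ℝ) ^ 2) ^ (k + 1) ≤ E2 ^ k * (D.card * C) := by
    refine le_trans hgh ?_
    apply mul_le_mul_of_nonneg_right _ (mul_nonneg (Nat.cast_nonneg _) hCnn)
    exact pow_le_pow_left₀ (Finset.sum_nonneg fun y _ =>
      mul_nonneg (Nat.cast_nonneg _) (Nat.cast_nonneg _)) hsubD k
  -- конечная арифметика
  rw [ge_iff_le, div_le_iff₀ hKpos]
  have hDc : ((D.card : ℝ)) = K * A.card := hK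
  have hmul : ((A.card : ℝ) ^ 2) ^ (k + 1) * bc ^ (2 * k)
      ≤ E2 ^ k * (K * A.card) * Ek := by
    have : E2 ^ k * (D.card * C) * bc ^ (2 * k) = E2 ^ k * (K * A.card) * Ek := by
      rw [hDc, hC]
      field_simp
    calc ((A.card : ℝ) ^ 2) ^ (k + 1) * bc ^ (2 * k)
        ≤ E2 ^ k * (D.card * C) * bc ^ (2 * k) :=
          mul_le_mul_of_nonneg_right hmain (by positivity)
      _ = E2 ^ k * (K * A.card) * Ek := this
  have hpowe : ((A.card : ℝ) ^ 2) ^ (k + 1) = (A.card : ℝ) ^ (2 * k + 1) * A.card := by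
    rw [← pow_mul]
    have : 2 * (k + 1) = (2 * k + 1) + 1 := by ring
    rw [this, pow_succ]
  rw [hpowe] at hmul
  have hfin : ((A.card : ℝ) ^ (2 * k + 1) * bc ^ (2 * k)) * A.card
      ≤ (Ek * E2 ^ k * K) * A.card := by
    calc ((A.card : ℝ) ^ (2 * k + 1) * bc ^ (2 * k)) * A.card
        = (A.card : ℝ) ^ (2 * k + 1) * A.card * bc ^ (2 * k) := by ring
      _ ≤ E2 ^ k * (K * A.card) * Ek := hmul
      _ = (Ek * E2 ^ k * K) * A.card := by ring
  exact le_of_mul_le_mul_right hfin hAcpos
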